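/- Let ρ(δ), θ(δ), τ(δ) = 2ρθ, μ(δ) denote respectively the radius, half-angle, length, and enclosed signed area of the family of circular arcs through P = (cos θ̄, ±sin θ̄) and (1+δ, 0) with centre (η(δ), 0) on the x-axis, for 0 < θ̄ < π/2. Then at δ = 0: ρ'(0) = −cos θ̄/(1 − cos θ̄), θ'(0) = sin θ̄/(1 − cos θ̄), and μ'(0) = τ'(0) = 2(sin θ̄ − θ̄ cos θ̄)/(1 − cos θ̄). More generally, for any δ, τ' = 2(sin θ − θ cos θ)/(1 − cos θ) and μ' = ρ τ'. -/

import Mathlib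

open Real Set

/-- Derivative formulas for the family of circular arcs through
`P = (cos θ̄, ± sin θ̄)` and `(1+δ, 0)` with centre `(η(δ), 0)` on the x-axis:
radius `ρ(δ)`, half-angle `θ(δ)`, length `τ(δ) = 2ρθ`, signed enclosed area
`μ(δ) = ρ²θ + η sin θ̄ − θ̄`. -/
theorem arc_derivative_formulas (θbar : ℝ) (hθbar : θbar ∈ Ioo 0 (π / 2))
    (I : Set ℝ) (hI : IsOpen I) (h0 : (0 : ℝ) ∈ I)
    (ρ θ η τ μ ρd θd ηd τd μd : ℝ → ℝ)
    (hρpos : ∀ δ ∈ I, 0 < ρ δ) (hθrange : ∀ δ ∈ I, θ δ ∈ Ioo 0 π)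
    -- defining constraints of the family
    (hsin : ∀ δ ∈ I, ρ δ * sin (θ δ) = sin θbar)
    (hcos : ∀ δ ∈ I, ρ δ * cos (θ δ) = cos θbar - η δ)
    (hcentre : ∀ δ ∈ I, η δ + ρ δ = 1 + δ)
    (hτ : ∀ δ ∈ I, τ δ = 2 * ρ δ * θ δ)
    (hμ : ∀ δ ∈ I, μ δ = (ρ δ) ^ 2 * θ δ + η δ * sin θbar - θbar)
    (hρ0 : ρ 0 = 1) (hθ0 : θ 0 = θbar) (hη0 : η 0 = 0)
    -- differentiability of the family
    (hρ' : ∀ δ ∈ I, HasDerivAt ρ (ρd δ) δ)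
    (hθ' : ∀ δ ∈ I, HasDerivAt θ (θd δ) δ)
    (hη' : ∀ δ ∈ I, HasDerivAt η (ηd δ) δ)
    (hτ' : ∀ δ ∈ I, HasDerivAt τ (τd δ) δ)
    (hμ' : ∀ δ ∈ I, HasDerivAt μ (μd δ) δ) :
    ρd 0 = -(cos θbar) / (1 - cos θbar) ∧
    θd 0 = sin θbar / (1 - cos θbar) ∧
    μd 0 = 2 * (sin θbar - θbar * cos θbar) / (1 - cos θbar) ∧
    τd 0 = 2 * (sin θbar - θbar * cos θbar) / (1 - cos θbar) ∧
    (∀ δ ∈ I, τd δ = 2 * (sin (θ δ) - θ δ * cos (θ δ)) / (1 - cos (θ δ)) ∧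
      μd δ = ρ δ * τd δ) := by
  have key : ∀ δ ∈ I,
      ρd δ * (1 - cos (θ δ)) = -cos (θ δ) ∧
      θd δ * (ρ δ * (1 - cos (θ δ))) = sin (θ δ) ∧
      τd δ * (1 - cos (θ δ)) = 2 * (sin (θ δ) - θ δ * cos (θ δ)) ∧
      μd δ = ρ δ * τd δ ∧ cos (θ δ) < 1 := by
    intro δ hδ
    have hδmem : I ∈ nhds δ := hI.mem_nhds hδ
    have hs : 0 < sin (θ δ) :=
      Real.sin_pos_of_pos_of_lt_pi (hθrange δ hδ).1 (hθrange δ hδ).2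
    have hpyth : sin (θ δ) ^ 2 + cos (θ δ) ^ 2 = 1 := Real.sin_sq_add_cos_sq (θ δ)
    have hclt : cos (θ δ) < 1 := by nlinarith [hs, hpyth, Real.cos_le_one (θ δ)]
    have hne : (1 : ℝ) - cos (θ δ) ≠ 0 := (sub_pos.mpr hclt).ne'
    have hρ := hρ' δ hδ
    have hθ := hθ' δ hδ
    have hη := hη' δ hδ
    -- derivative of ρ sin θ = sin θbar
    have d1 : HasDerivAt (fun x => ρ x * sin (θ x))
        (ρd δ * sin (θ δ) + ρ δ * (cos (θ δ) * θd δ)) δ :=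
      hρ.mul ((Real.hasDerivAt_sin (θ δ)).comp δ hθ)
    have d1' : HasDerivAt (fun x => ρ x * sin (θ x)) 0 δ :=
      (hasDerivAt_const δ (sin θbar)).congr_of_eventuallyEq
        (Filter.eventuallyEq_of_mem hδmem fun x hx => hsin x hx)
    have eq1 : ρd δ * sin (θ δ) + ρ δ * (cos (θ δ) * θd δ) = 0 := d1.unique d1'
    -- derivative of ρ cos θ + η = cos θbar
    have d2 : HasDerivAt (fun x => ρ x * cos (θ x) + η x)
        ((ρd δ * cos (θ δ) + ρ δ * (-sin (θ δ) * θd δ)) + ηd δ) δ :=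
      (hρ.mul ((Real.hasDerivAt_cos (θ δ)).comp δ hθ)).add hη
    have d2' : HasDerivAt (fun x => ρ x * cos (θ x) + η x) 0 δ :=
      (hasDerivAt_const δ (cos θbar)).congr_of_eventuallyEq
        (Filter.eventuallyEq_of_mem hδmem fun x hx => by
          simpa using (hcos x hx).symm ▸ (by linarith [hcos x hx] : ρ x * cos (θ x) + η x = cos θbar))
    have eq2 : (ρd δ * cos (θ δ) + ρ δ * (-sin (θ δ) * θd δ)) + ηd δ = 0 := d2.unique d2'
    -- derivative of η + ρ = 1 + δ
    have d3 : HasDerivAt (fun x => η x + ρ x) (ηd δ + ρd δ) δ := hη.add hρ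
    have d3' : HasDerivAt (fun x => η x + ρ x) 1 δ :=
      ((hasDerivAt_id δ).const_add 1).congr_of_eventuallyEq
        (Filter.eventuallyEq_of_mem hδmem fun x hx => hcentre x hx)
    have eq3 : ηd δ + ρd δ = 1 := d3.unique d3'
    -- derivative of τ = 2 ρ θ
    have d4 : HasDerivAt τ (2 * ρd δ * θ δ + 2 * ρ δ * θd δ) δ := by
      have : HasDerivAt (fun x => 2 * ρ x * θ x) (2 * ρd δ * θ δ + 2 * ρ δ * θd δ) δ := by
        simpa [mul_assoc, Pi.mul_def] using ((hρ.const_mul 2).mul hθ)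
      exact this.congr_of_eventuallyEq
        (Filter.eventuallyEq_of_mem hδmem fun x hx => hτ x hx)
    have eq4 : τd δ = 2 * ρd δ * θ δ + 2 * ρ δ * θd δ := (hτ' δ hδ).unique d4
    -- derivative of μ = ρ² θ + η sin θbar − θbar
    have d5 : HasDerivAt μ
        ((2 * ρ δ ^ 1 * ρd δ) * θ δ + ρ δ ^ 2 * θd δ + ηd δ * sin θbar) δ := by
      have : HasDerivAt (fun x => ρ x ^ 2 * θ x + η x * sin θbar - θbar)
          ((2 * ρ δ ^ 1 * ρd δ) * θ δ + ρ δ ^ 2 * θd δ + ηd δ * sin θbar) δ :=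
        (((hρ.pow 2).mul hθ).add (hη.mul_const (sin θbar))).sub_const θbar
      exact this.congr_of_eventuallyEq
        (Filter.eventuallyEq_of_mem hδmem fun x hx => hμ x hx)
    have eq5 : μd δ = (2 * ρ δ ^ 1 * ρd δ) * θ δ + ρ δ ^ 2 * θd δ + ηd δ * sin θbar :=
      (hμ' δ hδ).unique d5
    have hsinδ : ρ δ * sin (θ δ) = sin θbar := hsin δ hδ
    -- solve the linear system
    have R2 : θd δ * (ρ δ * (1 - cos (θ δ))) = sin (θ δ) := by
      linear_combination (cos (θ δ) - 1) * eq1 - sin (θ δ) * eq2 + sin (θ δ) * eq3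
        - ρ δ * θd δ * hpyth
    have R1 : ρd δ * (1 - cos (θ δ)) = -cos (θ δ) := by
      have h : sin (θ δ) * (ρd δ * (1 - cos (θ δ)) + cos (θ δ)) = 0 := by
        linear_combination (1 - cos (θ δ)) * eq1 - cos (θ δ) * R2
      have := (mul_eq_zero.mp h).resolve_left hs.ne'
      linarith
    have Rτ : τd δ * (1 - cos (θ δ)) = 2 * (sin (θ δ) - θ δ * cos (θ δ)) := by
      linear_combination (1 - cos (θ δ)) * eq4 + 2 * θ δ * R1 + 2 * R2
    have Rμ : μd δ = ρ δ * τd δ := by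
      have h : μd δ * (1 - cos (θ δ)) = (ρ δ * τd δ) * (1 - cos (θ δ)) := by
        linear_combination (1 - cos (θ δ)) * eq5 - ρ δ * Rτ + (2 * ρ δ * θ δ) * R1
          + ρ δ * R2 - ηd δ * (1 - cos (θ δ)) * hsinδ
          + ρ δ * sin (θ δ) * (1 - cos (θ δ)) * eq3 - ρ δ * sin (θ δ) * R1
      exact mul_right_cancel₀ hne h
    exact ⟨R1, R2, Rτ, Rμ, hclt⟩
  obtain ⟨R1, R2, Rτ, Rμ, hclt⟩ := key 0 h0
  rw [hθ0] at R1 R2 Rτ hclt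
  rw [hρ0] at R2 Rμ
  have hne : (1 : ℝ) - cos θbar ≠ 0 := (sub_pos.mpr hclt).ne'
  refine ⟨?_, ?_, ?_, ?_, ?_⟩
  · rw [eq_div_iff hne]; linarith
  · rw [eq_div_iff hne]; linarith [R2]
  · rw [Rμ, one_mul, eq_div_iff hne]; linarith
  · rw [eq_div_iff hne]; linarith
  · intro δ hδ
    obtain ⟨_, _, Rτ', Rμ', hclt'⟩ := key δ hδ
    have hne' : (1 : ℝ) - cos (θ δ) ≠ 0 := (sub_pos.mpr hclt').ne'
    exact ⟨by rw [eq_div_iff hne']; linarith, Rμ'⟩
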